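/- Let G be a finite connected graph and S a maximal independent set in G. Define the MIS-derived graph on vertex set S by joining x,y ∈ S when 0 < d_G(x,y) ≤ 3. Then the MIS-derived graph is connected. -/

import Mathlib

open SimpleGraph

/-- The MIS-derived graph: vertices are the elements of `S`, and `x, y ∈ S` are
joined when `0 < d_G(x,y) ≤ 3`. -/
def misGraph {V : Type*} (G : SimpleGraph V) (S : Set V) : SimpleGraph S where
  Adj x y := 0 < G.dist x y ∧ G.dist x y ≤ 3
  symm := by
    constructor
    intro x y h
    rwa [SimpleGraph.dist_comm]
  loopless := by
    constructor
    intro x h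
    simp [SimpleGraph.dist_self] at h

/-- The MIS-derived graph of a maximal independent set in a finite connected
graph is connected. -/
theorem misGraph_connected {V : Type*} [Fintype V] (G : SimpleGraph V)
    (hG : G.Connected) (S : Set V)
    (hind : ∀ x ∈ S, ∀ y ∈ S, ¬ G.Adj x y)
    (hmax : ∀ v : V, v ∉ S → ∃ w ∈ S, G.Adj v w) :
    (misGraph G S).Connected := by
  -- key claim by induction on a bound for the distance
  have key : ∀ n : ℕ, ∀ x y : V, ∀ hx : x ∈ S, ∀ hy : y ∈ S, G.dist x y ≤ n →
      (misGraph G S).Reachable ⟨x, hx⟩ ⟨y, hy⟩ := by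
    intro n
    induction n with
    | zero =>
      intro x y hx hy h
      have : x = y := (hG.dist_eq_zero_iff).mp (Nat.le_zero.mp h)
      subst this
      exact Reachable.refl _
    | succ n ih =>
      intro x y hx hy h
      by_cases h0 : G.dist x y = 0
      · have : x = y := (hG.dist_eq_zero_iff).mp h0
        subst this; exact Reachable.refl _
      by_cases h3 : G.dist x y ≤ 3
      · exact Adj.reachable ⟨Nat.pos_of_ne_zero h0, h3⟩
      push_neg at h3
      have h4 : 4 ≤ G.dist x y := h3
      obtain ⟨p, hp⟩ := SimpleGraph.exists_walk_of_dist_ne_zero h0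
      have hpn : ¬ p.Nil := by
        rw [SimpleGraph.Walk.not_nil_iff_lt_length, hp]; omega
      have hptn : ¬ p.tail.Nil := by
        rw [SimpleGraph.Walk.not_nil_iff_lt_length]
        have := SimpleGraph.Walk.length_tail_add_one hpn
        omega
      set w := p.tail.getVert 1 with hw
      -- distance bounds
      have hlen2 : p.tail.tail.length = G.dist x y - 2 := by
        have h1 := SimpleGraph.Walk.length_tail_add_one hpn
        have h2 := SimpleGraph.Walk.length_tail_add_one hptn
        omega
      have hwy : G.dist w y ≤ G.dist x y - 2 := by
        rw [hw]
        exact (SimpleGraph.dist_le p.tail.tail).trans (by omega)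
      have hxw2 : G.dist x w ≤ 2 := by
        have a1 : G.Adj x (p.getVert 1) := SimpleGraph.Walk.adj_snd hpn
        have a2 : G.Adj (p.getVert 1) w := SimpleGraph.Walk.adj_snd hptn
        have := SimpleGraph.dist_le (SimpleGraph.Walk.cons a1 (SimpleGraph.Walk.cons a2 SimpleGraph.Walk.nil))
        simpa using this
      have hxw1 : 2 ≤ G.dist x w := by
        have := hG.dist_triangle (u := x) (v := w) (w := y)
        omega
      by_cases hwS : w ∈ S
      · have e1 : (misGraph G S).Adj ⟨x, hx⟩ ⟨w, hwS⟩ :=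
          ⟨show 0 < G.dist x w by omega, show G.dist x w ≤ 3 by omega⟩
        have r2 := ih w y hwS hy (by omega)
        exact (e1.reachable).trans r2
      · obtain ⟨s, hsS, hws⟩ := hmax w hwS
        have hws1 : G.dist w s = 1 := SimpleGraph.dist_eq_one_iff_adj.mpr hws
        have hxs : G.dist x s ≤ 3 := by
          have := hG.dist_triangle (u := x) (v := w) (w := s)
          omega
        have hxs0 : 0 < G.dist x s := by
          have := hG.dist_triangle (u := x) (v := s) (w := w)
          have hsw : G.dist s w = 1 := by rwa [SimpleGraph.dist_comm]
          omega
        have hsy : G.dist s y ≤ n := by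
          have := hG.dist_triangle (u := s) (v := w) (w := y)
          have hsw : G.dist s w = 1 := by rwa [SimpleGraph.dist_comm]
          omega
        have e1 : (misGraph G S).Adj ⟨x, hx⟩ ⟨s, hsS⟩ :=
          ⟨show 0 < G.dist x s from hxs0, show G.dist x s ≤ 3 from hxs⟩
        exact (e1.reachable).trans (ih s y hsS hy hsy)
  rw [SimpleGraph.connected_iff]
  refine ⟨?_, ?_⟩
  · intro x y
    exact key (G.dist x y) x.1 y.1 x.2 y.2 le_rfl
  · -- S is nonempty
    obtain ⟨v⟩ := hG.nonempty
    by_cases hv : v ∈ S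
    · exact ⟨⟨v, hv⟩⟩
    · obtain ⟨w, hwS, _⟩ := hmax v hv
      exact ⟨⟨w, hwS⟩⟩
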